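/- Let ρ0, ρ1 be positive definite density matrices on ℂ^D. Then for every positive definite D×D matrix G, Re tr(ρ0 G) · Re tr(ρ1 G^{-1}) ≥ (tr √(ρ1^{1/2} ρ0 ρ1^{1/2}))², and there exists a positive definite G achieving equality. Hence the quantum fidelity satisfies F(ρ0, ρ1) = √( min over positive definite G of tr(ρ0 G) tr(ρ1 G^{-1}) ). -/

import Mathlib

open Matrix
open scoped ComplexOrder

/-- The positive semidefinite square root of a positive semidefinite matrix
(Mathlib's former `Matrix.PosSemidef.sqrt`, removed since; restated with its old definition). -/
noncomputable def Matrix.PosSemidef.sqrt {n : Type*} [Fintype n] [DecidableEq n]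
    {A : Matrix n n ℂ} (hA : A.PosSemidef) : Matrix n n ℂ :=
  hA.1.eigenvectorUnitary.1 * diagonal ((↑) ∘ (√·) ∘ hA.1.eigenvalues) *
  (star hA.1.eigenvectorUnitary : Matrix n n ℂ)

lemma Matrix.PosSemidef.posSemidef_sqrt {n : Type*} [Fintype n] [DecidableEq n]
    {A : Matrix n n ℂ} (hA : A.PosSemidef) : hA.sqrt.PosSemidef := by
  have hd : (diagonal ((↑) ∘ (√·) ∘ hA.1.eigenvalues : n → ℂ)).PosSemidef := by
    rw [posSemidef_diagonal_iff]
    intro i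
    simp only [Function.comp_apply, Complex.zero_le_real]
    exact Real.sqrt_nonneg _
  have h := hd.mul_mul_conjTranspose_same (hA.1.eigenvectorUnitary : Matrix n n ℂ)
  unfold Matrix.PosSemidef.sqrt
  simpa [Unitary.coe_star, Matrix.star_eq_conjTranspose] using h

/-- The sandwiched matrix `ρ1^{1/2} ρ0 ρ1^{1/2}` is positive semidefinite. -/
noncomputable def sandwichPosSemidef {D : ℕ} {ρ0 ρ1 : Matrix (Fin D) (Fin D) ℂ}
    (hρ0 : ρ0.PosSemidef) (hρ1 : ρ1.PosSemidef) :
    (hρ1.sqrt * ρ0 * hρ1.sqrt).PosSemidef := by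
  have h := hρ0.mul_mul_conjTranspose_same hρ1.sqrt
  rwa [hρ1.posSemidef_sqrt.isHermitian.eq] at h

open scoped MatrixOrder in
lemma Matrix.PosSemidef.sqrt_eq_cfc_sqrt {n : Type*} [Fintype n] [DecidableEq n]
    {A : Matrix n n ℂ} (hA : A.PosSemidef) : hA.sqrt = CFC.sqrt A := by
  rw [CFC.sqrt_eq_real_sqrt A hA.nonneg, cfcₙ_eq_cfc (hf0 := by simp), hA.1.cfc_eq,
    Matrix.IsHermitian.cfc, Unitary.conjStarAlgAut_apply]
  rfl

open scoped MatrixOrder in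
lemma Matrix.PosSemidef.sqrt_mul_self {n : Type*} [Fintype n] [DecidableEq n]
    {A : Matrix n n ℂ} (hA : A.PosSemidef) : hA.sqrt * hA.sqrt = A := by
  rw [hA.sqrt_eq_cfc_sqrt, CFC.sqrt_mul_sqrt_self A hA.nonneg]

open scoped MatrixOrder in
lemma Matrix.PosSemidef.eq_sqrt_of_sq_eq {n : Type*} [Fintype n] [DecidableEq n]
    {A : Matrix n n ℂ} (hA : A.PosSemidef) {B : Matrix n n ℂ} (hB : B.PosSemidef)
    (hAB : A ^ 2 = B) : A = hB.sqrt := by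
  rw [hB.sqrt_eq_cfc_sqrt, CFC.sqrt_unique (by rw [← pow_two, hAB]) hA.nonneg]

noncomputable def matVec {D : ℕ} (P : Matrix (Fin D) (Fin D) ℂ) :
    EuclideanSpace ℂ (Fin D × Fin D) := WithLp.toLp 2 (fun p => P p.1 p.2)

lemma trace_eq_inner {D : ℕ} (P Q : Matrix (Fin D) (Fin D) ℂ) :
    (Pᴴ * Q).trace = inner (𝕜 := ℂ) (matVec P) (matVec Q) := by
  rw [Matrix.trace, PiLp.inner_apply]
  simp_rw [Matrix.diag_apply, Matrix.mul_apply, Matrix.conjTranspose_apply,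
    RCLike.inner_apply, RCLike.star_def, matVec]
  rw [Fintype.sum_prod_type, Finset.sum_comm]
  exact Finset.sum_congr rfl fun i _ => Finset.sum_congr rfl fun j _ => mul_comm _ _

lemma trace_cauchy_schwarz {D : ℕ} (M N : Matrix (Fin D) (Fin D) ℂ) :
    ‖(Mᴴ * N).trace‖ ^ 2 ≤ (Mᴴ * M).trace.re * (Nᴴ * N).trace.re := by
  have hMx : (Mᴴ * M).trace.re = ‖matVec M‖ ^ 2 := by
    rw [trace_eq_inner M M, inner_self_eq_norm_sq_to_K (𝕜 := ℂ)]
    rw [← RCLike.ofReal_pow, ← RCLike.re_to_complex]; exact RCLike.ofReal_re _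
  have hNy : (Nᴴ * N).trace.re = ‖matVec N‖ ^ 2 := by
    rw [trace_eq_inner N N, inner_self_eq_norm_sq_to_K (𝕜 := ℂ)]
    rw [← RCLike.ofReal_pow, ← RCLike.re_to_complex]; exact RCLike.ofReal_re _
  rw [hMx, hNy, trace_eq_inner M N]
  calc ‖inner (𝕜 := ℂ) (matVec M) (matVec N)‖ ^ 2
      = ‖inner (𝕜 := ℂ) (matVec M) (matVec N)‖ ^ 2 := rfl
    _ ≤ (‖matVec M‖ * ‖matVec N‖) ^ 2 :=
        pow_le_pow_left₀ (norm_nonneg _) (norm_inner_le_norm _ _) 2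
    _ = ‖matVec M‖ ^ 2 * ‖matVec N‖ ^ 2 := mul_pow _ _ _

lemma posDef_of_posSemidef_isUnit {D : ℕ} {A : Matrix (Fin D) (Fin D) ℂ}
    (hA : A.PosSemidef) (h : IsUnit A) : A.PosDef := by
  exact hA.posDef_iff_isUnit.mpr h

lemma isUnit_of_mul_self_isUnit {D : ℕ} {A B : Matrix (Fin D) (Fin D) ℂ}
    (hAA : A * A = B) (hB : IsUnit B) : IsUnit A := by
  rw [Matrix.isUnit_iff_isUnit_det] at hB ⊢
  have : A.det * A.det = B.det := by rw [← Matrix.det_mul, hAA]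
  exact isUnit_of_mul_isUnit_left (this ▸ hB)

/-- For positive definite density matrices `ρ0, ρ1`, every positive definite `G` satisfies
`tr(ρ0 G) tr(ρ1 G⁻¹) ≥ F(ρ0,ρ1)²`, and some positive definite `G` achieves equality;
hence `F(ρ0,ρ1)² = min_G tr(ρ0 G) tr(ρ1 G⁻¹)`. -/
theorem fidelity_sq_eq_min_trace_G {D : ℕ} (ρ0 ρ1 : Matrix (Fin D) (Fin D) ℂ)
    (hρ0 : ρ0.PosDef) (hρ1 : ρ1.PosDef)
    (hρ0t : ρ0.trace = 1) (hρ1t : ρ1.trace = 1) :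
    (∀ G : Matrix (Fin D) (Fin D) ℂ, G.PosDef →
        (((sandwichPosSemidef hρ0.posSemidef hρ1.posSemidef).sqrt).trace.re) ^ 2
          ≤ ((ρ0 * G).trace).re * ((ρ1 * G⁻¹).trace).re) ∧
    (∃ G : Matrix (Fin D) (Fin D) ℂ, G.PosDef ∧
        ((ρ0 * G).trace).re * ((ρ1 * G⁻¹).trace).re
          = (((sandwichPosSemidef hρ0.posSemidef hρ1.posSemidef).sqrt).trace.re) ^ 2) := by
  classical
  set R0 := hρ0.posSemidef.sqrt with hR0def
  set R1 := hρ1.posSemidef.sqrt with hR1def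
  have hR0H : R0ᴴ = R0 := hρ0.posSemidef.posSemidef_sqrt.isHermitian
  have hR1H : R1ᴴ = R1 := hρ1.posSemidef.posSemidef_sqrt.isHermitian
  have hR0sq : R0 * R0 = ρ0 := hρ0.posSemidef.sqrt_mul_self
  have hR1sq : R1 * R1 = ρ1 := hρ1.posSemidef.sqrt_mul_self
  have hR0u : IsUnit R0 := isUnit_of_mul_self_isUnit hR0sq hρ0.isUnit
  have hR1u : IsUnit R1 := isUnit_of_mul_self_isUnit hR1sq hρ1.isUnit
  have hR0d : IsUnit R0.det := (Matrix.isUnit_iff_isUnit_det R0).mp hR0u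
  set S1 := (sandwichPosSemidef hρ0.posSemidef hρ1.posSemidef).sqrt with hS1def
  have hS1psd : S1.PosSemidef :=
    (sandwichPosSemidef hρ0.posSemidef hρ1.posSemidef).posSemidef_sqrt
  have hS1H : S1ᴴ = S1 := hS1psd.isHermitian
  have hS1sq : S1 * S1 = R1 * ρ0 * R1 :=
    (sandwichPosSemidef hρ0.posSemidef hρ1.posSemidef).sqrt_mul_self
  set X := R0 * R1 with hXdef
  have hXH : Xᴴ = R1 * R0 := by rw [hXdef, conjTranspose_mul, hR0H, hR1H]
  have hXX : Xᴴ * X = S1 * S1 := by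
    rw [hXH, hS1sq, ← hR0sq, hXdef]
    simp only [Matrix.mul_assoc]
  have hXu : IsUnit X := hR0u.mul hR1u
  have hXHu : IsUnit Xᴴ := by rw [hXH]; exact hR1u.mul hR0u
  have hS1u : IsUnit S1 := isUnit_of_mul_self_isUnit rfl (hXX ▸ hXHu.mul hXu)
  have hS1d : IsUnit S1.det := (Matrix.isUnit_iff_isUnit_det S1).mp hS1u
  set U := X * S1⁻¹ with hUdef
  have hUH : Uᴴ = S1⁻¹ * Xᴴ := by
    rw [hUdef, conjTranspose_mul, conjTranspose_nonsing_inv, hS1H]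
  have hU1 : Uᴴ * U = 1 := by
    rw [hUH, hUdef]
    calc S1⁻¹ * Xᴴ * (X * S1⁻¹) = S1⁻¹ * (Xᴴ * X) * S1⁻¹ := by
          simp only [Matrix.mul_assoc]
      _ = S1⁻¹ * (S1 * S1) * S1⁻¹ := by rw [hXX]
      _ = 1 := by
          rw [Matrix.mul_assoc S1⁻¹ (S1 * S1) S1⁻¹, Matrix.mul_assoc S1 S1 S1⁻¹,
            Matrix.mul_nonsing_inv S1 hS1d, Matrix.mul_one,
            Matrix.nonsing_inv_mul S1 hS1d]
  have hU1' : U * Uᴴ = 1 := mul_eq_one_comm.mp hU1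
  have hUS1 : U * S1 = X := by
    rw [hUdef, Matrix.mul_assoc, Matrix.nonsing_inv_mul S1 hS1d, Matrix.mul_one]
  have hS1U : S1 * Uᴴ = Xᴴ := by
    rw [hUH, ← Matrix.mul_assoc, Matrix.mul_nonsing_inv S1 hS1d, Matrix.one_mul]
  have hUX : Uᴴ * X = S1 := by
    rw [hUH, Matrix.mul_assoc, hXX, ← Matrix.mul_assoc,
      Matrix.nonsing_inv_mul S1 hS1d, Matrix.one_mul]
  clear_value U X S1 R1 R0
  constructor
  · -- the inequality
    intro G hG
    set g := hG.posSemidef.sqrt with hgdef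
    have hgH : gᴴ = g := hG.posSemidef.posSemidef_sqrt.isHermitian
    have hgsq : g * g = G := hG.posSemidef.sqrt_mul_self
    have hgu : IsUnit g := isUnit_of_mul_self_isUnit hgsq hG.isUnit
    have hgd : IsUnit g.det := (Matrix.isUnit_iff_isUnit_det g).mp hgu
    have hginvH : (g⁻¹)ᴴ = g⁻¹ := by rw [conjTranspose_nonsing_inv, hgH]
    clear_value g
    have hMH : (g * R0 * U)ᴴ = Uᴴ * R0 * g := by
      rw [conjTranspose_mul, conjTranspose_mul, hgH, hR0H, Matrix.mul_assoc]
    have hcs := trace_cauchy_schwarz (g * R0 * U) (g⁻¹ * R1)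
    have h1 : ((g * R0 * U)ᴴ * (g⁻¹ * R1)).trace = S1.trace := by
      have he : (g * R0 * U)ᴴ * (g⁻¹ * R1) = Uᴴ * X := by
        rw [hMH]
        calc Uᴴ * R0 * g * (g⁻¹ * R1) = Uᴴ * (R0 * ((g * g⁻¹) * R1)) := by
              simp only [Matrix.mul_assoc]
          _ = Uᴴ * (R0 * R1) := by
              rw [Matrix.mul_nonsing_inv g hgd, Matrix.one_mul]
          _ = Uᴴ * X := by rw [hXdef]
      rw [he, hUX]
    have h2 : ((g * R0 * U)ᴴ * (g * R0 * U)).trace = (ρ0 * G).trace := by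
      have he : (g * R0 * U)ᴴ * (g * R0 * U) = Uᴴ * (R0 * G * R0) * U := by
        rw [hMH, ← hgsq]
        simp only [Matrix.mul_assoc]
      rw [he, trace_mul_cycle, ← Matrix.mul_assoc, hU1', Matrix.one_mul,
        trace_mul_cycle, hR0sq]
    have h3 : ((g⁻¹ * R1)ᴴ * (g⁻¹ * R1)).trace = (ρ1 * G⁻¹).trace := by
      have he : (g⁻¹ * R1)ᴴ * (g⁻¹ * R1) = R1 * G⁻¹ * R1 := by
        rw [conjTranspose_mul, hginvH, hR1H, ← hgsq, Matrix.mul_inv_rev]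
        simp only [Matrix.mul_assoc]
      rw [he, trace_mul_cycle, hR1sq]
    rw [h1, h2, h3] at hcs
    refine le_trans ?_ hcs
    calc S1.trace.re ^ 2 = |S1.trace.re| ^ 2 := (sq_abs _).symm
      _ ≤ ‖S1.trace‖ ^ 2 :=
          pow_le_pow_left₀ (abs_nonneg _) (Complex.abs_re_le_norm _) 2
  · -- the equality witness
    have hN0psd : (R0 * ρ1 * R0).PosSemidef := by
      have h := hρ1.posSemidef.mul_mul_conjTranspose_same R0
      rwa [hR0H] at h
    set S0 := hN0psd.sqrt with hS0def
    have hS0psd : S0.PosSemidef := hN0psd.posSemidef_sqrt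
    have hS0sq : S0 * S0 = R0 * ρ1 * R0 := hN0psd.sqrt_mul_self
    have hN0u : IsUnit (R0 * ρ1 * R0) := (hR0u.mul hρ1.isUnit).mul hR0u
    have hS0u : IsUnit S0 := isUnit_of_mul_self_isUnit hS0sq hN0u
    have hS0d : IsUnit S0.det := (Matrix.isUnit_iff_isUnit_det S0).mp hS0u
    clear_value S0
    -- S0 = U * S1 * Uᴴ
    have hUSpsd : (U * S1 * Uᴴ).PosSemidef := hS1psd.mul_mul_conjTranspose_same U
    have hsq : (U * S1 * Uᴴ) ^ 2 = R0 * ρ1 * R0 := by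
      rw [pow_two]
      calc U * S1 * Uᴴ * (U * S1 * Uᴴ) = U * S1 * (Uᴴ * U) * (S1 * Uᴴ) := by
            simp only [Matrix.mul_assoc]
        _ = X * Xᴴ := by rw [hU1, Matrix.mul_one, hUS1, hS1U]
        _ = R0 * ρ1 * R0 := by
            rw [hXH, hXdef, ← hR1sq]
            simp only [Matrix.mul_assoc]
    have hS0eq : U * S1 * Uᴴ = S0 := by
      rw [hS0def]; exact hUSpsd.eq_sqrt_of_sq_eq hN0psd hsq
    have htr : S0.trace = S1.trace := by
      rw [← hS0eq, trace_mul_cycle, hU1, Matrix.one_mul]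
    have hR0invH : (R0⁻¹)ᴴ = R0⁻¹ := by rw [conjTranspose_nonsing_inv, hR0H]
    refine ⟨R0⁻¹ * S0 * R0⁻¹, ?_, ?_⟩
    · refine posDef_of_posSemidef_isUnit ?_ ?_
      · have h := hS0psd.mul_mul_conjTranspose_same R0⁻¹
        rwa [hR0invH] at h
      · have hR0invu : IsUnit R0⁻¹ := Matrix.isUnit_nonsing_inv_iff.mpr hR0u
        exact (hR0invu.mul hS0u).mul hR0invu
    · have ht0 : (ρ0 * (R0⁻¹ * S0 * R0⁻¹)).trace = S0.trace := by
        have he : ρ0 * (R0⁻¹ * S0 * R0⁻¹) = R0 * S0 * R0⁻¹ := by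
          rw [← hR0sq]
          calc R0 * R0 * (R0⁻¹ * S0 * R0⁻¹) = R0 * ((R0 * R0⁻¹) * (S0 * R0⁻¹)) := by
                simp only [Matrix.mul_assoc]
            _ = R0 * (S0 * R0⁻¹) := by
                rw [Matrix.mul_nonsing_inv R0 hR0d, Matrix.one_mul]
            _ = R0 * S0 * R0⁻¹ := by rw [Matrix.mul_assoc]
        rw [he, trace_mul_cycle, Matrix.nonsing_inv_mul R0 hR0d, Matrix.one_mul]
      have ht1 : (ρ1 * (R0⁻¹ * S0 * R0⁻¹)⁻¹).trace = S0.trace := by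
        have hGinv : (R0⁻¹ * S0 * R0⁻¹)⁻¹ = R0 * S0⁻¹ * R0 := by
          rw [Matrix.mul_inv_rev, Matrix.mul_inv_rev,
            Matrix.nonsing_inv_nonsing_inv R0 hR0d]
          simp only [Matrix.mul_assoc]
        rw [hGinv]
        calc (ρ1 * (R0 * S0⁻¹ * R0)).trace = ((ρ1 * R0 * S0⁻¹) * R0).trace := by
              simp only [Matrix.mul_assoc]
          _ = (R0 * (ρ1 * R0 * S0⁻¹)).trace := trace_mul_comm _ _
          _ = ((R0 * ρ1 * R0) * S0⁻¹).trace := by simp only [Matrix.mul_assoc]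
          _ = ((S0 * S0) * S0⁻¹).trace := by rw [hS0sq]
          _ = S0.trace := by
              rw [Matrix.mul_assoc, Matrix.mul_nonsing_inv S0 hS0d, Matrix.mul_one]
      rw [ht0, ht1, htr, sq]
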